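/- arXiv:0903.3814 — 8 statements merged into one kernel-verified Lean document; each statement's English description precedes it below -/
import Mathlib

section
/- Let A be a (not necessarily unital) associative algebra over the complex numbers and W a linear representation of A via an algebra homomorphism ρ: A → End(W). Extend the action of A to the d-fold tensor power W^{⊗d} by derivations, i.e. a·(w_1 ⊗ ⋯ ⊗ w_d) = Σ_i w_1 ⊗ ⋯ ⊗ a·w_i ⊗ ⋯ ⊗ w_d, and extend this to an algebra homomorphism from the universal enveloping algebra U(A) of A (viewed as a Lie algebra with commutator bracket) to End(W^{⊗d}). Let E ⊂ End(W^{⊗d}) be the span of the images of all elements of U(A), and let E_r be the span of the images of elements of U(A) of degree at most r. Then E = E_d. -/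
open scoped TensorProduct

/-- The `d`-fold tensor power `W^{⊗d}`. -/
abbrev TPow (W : Type) [AddCommGroup W] [Module ℂ W] (d : ℕ) : Type :=
  PiTensorProduct ℂ (fun _ : Fin d => W)

/-- The derivation (Leibniz) action of an endomorphism `f` of `W` on `W^{⊗d}`:
`w_1 ⊗ ⋯ ⊗ w_d ↦ Σ_i w_1 ⊗ ⋯ ⊗ f(w_i) ⊗ ⋯ ⊗ w_d`. -/
noncomputable def derAction (W : Type) [AddCommGroup W] [Module ℂ W] (d : ℕ)
    (f : Module.End ℂ W) : Module.End ℂ (TPow W d) :=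
  ∑ i : Fin d, PiTensorProduct.map
    (Function.update (fun _ : Fin d => (LinearMap.id : W →ₗ[ℂ] W)) i f)

section Aux
variable (W : Type) [AddCommGroup W] [Module ℂ W] (d : ℕ)

noncomputable def slot (i : Fin d) (f : Module.End ℂ W) : Module.End ℂ (TPow W d) :=
  PiTensorProduct.map (Function.update (fun _ : Fin d => (LinearMap.id : W →ₗ[ℂ] W)) i f)

lemma derAction_eq (f : Module.End ℂ W) : derAction W d f = ∑ i : Fin d, slot W d i f := rfl

lemma slot_mul (i j : Fin d) (f g : Module.End ℂ W) : slot W d i f * slot W d j g =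
    PiTensorProduct.map (fun s =>
      (Function.update (fun _ : Fin d => (LinearMap.id : W →ₗ[ℂ] W)) i f s) ∘ₗ
      (Function.update (fun _ : Fin d => (LinearMap.id : W →ₗ[ℂ] W)) j g s)) := by
  rw [Module.End.mul_eq_comp, PiTensorProduct.map_comp]
  rfl

lemma slot_mul_same (i : Fin d) (f g : Module.End ℂ W) :
    slot W d i f * slot W d i g = slot W d i (f * g) := by
  rw [slot_mul, slot]
  congr 1
  funext s
  by_cases h : s = i
  · subst h; simp [Module.End.mul_eq_comp]
  · simp [Function.update_apply, h]

lemma slot_comm {i j : Fin d} (h : i ≠ j) (f g : Module.End ℂ W) :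
    slot W d i f * slot W d j g = slot W d j g * slot W d i f := by
  rw [slot_mul, slot_mul]
  congr 1
  funext s
  by_cases hi : s = i
  · subst hi; simp [Function.update_apply, h, Ne.symm h]
  · by_cases hj : s = j
    · subst hj; simp [Function.update_apply, hi, Ne.symm h]
    · simp [Function.update_apply, hi, hj]

end Aux

section Aux2
variable (W : Type) [AddCommGroup W] [Module ℂ W] (d : ℕ)

noncomputable def Ls {k : ℕ} (ψ : Fin k → Fin d) (a : Fin k → Module.End ℂ W) :
    Module.End ℂ (TPow W d) :=
  (List.ofFn fun i => slot W d (ψ i) (a i)).prod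

lemma Ls_zero (ψ : Fin 0 → Fin d) (a : Fin 0 → Module.End ℂ W) : Ls W d ψ a = 1 := by
  simp [Ls]

lemma Ls_cons {k : ℕ} (j : Fin d) (ψ : Fin k → Fin d) (f : Module.End ℂ W)
    (a : Fin k → Module.End ℂ W) :
    Ls W d (Fin.cons j ψ) (Fin.cons f a) = slot W d j f * Ls W d ψ a := by
  simp [Ls, List.ofFn_succ]

lemma slot_mul_Ls {k : ℕ} (ψ : Fin k → Fin d) (hψ : Function.Injective ψ) (i₀ : Fin k)
    (f : Module.End ℂ W) (a : Fin k → Module.End ℂ W) :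
    slot W d (ψ i₀) f * Ls W d ψ a = Ls W d ψ (Function.update a i₀ (f * a i₀)) := by
  induction k with
  | zero => exact i₀.elim0
  | succ k ih =>
    have hψ' : ψ = Fin.cons (ψ 0) (Fin.tail ψ) := (Fin.cons_self_tail ψ).symm
    have ha' : a = Fin.cons (a 0) (Fin.tail a) := (Fin.cons_self_tail a).symm
    have htinj : Function.Injective (Fin.tail ψ) := fun x y hxy =>
      Fin.succ_injective _ (hψ hxy)
    induction i₀ using Fin.cases with
    | zero =>
      rw [hψ', ha', Ls_cons]
      rw [← mul_assoc]
      simp only [Fin.cons_zero]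
      rw [slot_mul_same, ← Ls_cons, Fin.update_cons_zero]
    | succ i =>
      have hne : Fin.tail ψ i ≠ ψ 0 := fun hc => by
        exact absurd (hψ hc) (Fin.succ_ne_zero i)
      conv_lhs => rw [hψ', ha', Ls_cons]
      simp only [Fin.cons_succ]
      rw [← mul_assoc, slot_comm W d hne, mul_assoc]
      rw [ih (Fin.tail ψ) htinj i (Fin.tail a)]
      conv_rhs => rw [hψ', ha']
      simp only [Fin.cons_succ, ← Fin.cons_update]
      rw [Ls_cons]
end Aux2

section Aux3
variable (W : Type) [AddCommGroup W] [Module ℂ W] (d : ℕ)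

noncomputable def Pk (k : ℕ) (a : Fin k → Module.End ℂ W) : Module.End ℂ (TPow W d) :=
  ∑ ψ : Fin k ↪ Fin d, Ls W d (⇑ψ) a

lemma Pk_zero (a : Fin 0 → Module.End ℂ W) : Pk W d 0 a = 1 := by
  rw [Pk, Fintype.sum_unique, Ls_zero]

lemma Pk_eq_zero {k : ℕ} (h : d < k) (a : Fin k → Module.End ℂ W) : Pk W d k a = 0 := by
  haveI : IsEmpty (Fin k ↪ Fin d) :=
    ⟨fun ψ => by
      have := Fintype.card_le_of_injective ψ ψ.injective
      simp only [Fintype.card_fin] at this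
      omega⟩
  simp [Pk]

lemma derAction_mul_Pk (f : Module.End ℂ W) (k : ℕ) (a : Fin k → Module.End ℂ W) :
    derAction W d f * Pk W d k a =
      Pk W d (k + 1) (Fin.cons f a) +
        ∑ i : Fin k, Pk W d k (Function.update a i (f * a i)) := by
  classical
  rw [derAction_eq, Pk, Finset.sum_mul_sum]
  have step : ∀ ψ : Fin k ↪ Fin d,
      ∑ j : Fin d, slot W d j f * Ls W d (⇑ψ) a =
        (∑ j ∈ (Finset.univ.image ψ)ᶜ, Ls W d (Fin.cons j ⇑ψ) (Fin.cons f a)) +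
          ∑ i : Fin k, Ls W d (⇑ψ) (Function.update a i (f * a i)) := by
    intro ψ
    rw [← Finset.sum_compl_add_sum (Finset.univ.image ψ)
      (fun j => slot W d j f * Ls W d (⇑ψ) a)]
    congr 1
    · exact Finset.sum_congr rfl fun j _ => (Ls_cons W d j (⇑ψ) f a).symm
    · rw [Finset.sum_image (fun x _ y _ h => ψ.injective h)]
      exact Finset.sum_congr rfl fun i _ => slot_mul_Ls W d (⇑ψ) ψ.injective i f a
  rw [Finset.sum_comm]
  rw [show (∑ ψ : Fin k ↪ Fin d, ∑ j : Fin d, slot W d j f * Ls W d (⇑ψ) a) = _ from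
    Finset.sum_congr rfl fun ψ _ => step ψ]
  rw [Finset.sum_add_distrib]
  congr 1
  · rw [Finset.sum_sigma']
    rw [Pk]
    have hinj : ∀ p ∈ (Finset.univ.sigma
        fun ψ : Fin k ↪ Fin d => (Finset.univ.image ⇑ψ)ᶜ),
        Function.Injective (Fin.cons p.2 ⇑p.1 : Fin (k + 1) → Fin d) := by
      intro p hp
      rw [Fin.cons_injective_iff]
      refine ⟨?_, p.1.injective⟩
      rintro ⟨i, hi⟩
      have h2 := (Finset.mem_sigma.mp hp).2
      rw [Finset.mem_compl, Finset.mem_image] at h2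
      exact h2 ⟨i, Finset.mem_univ i, hi⟩
    refine Finset.sum_bij' (fun p hp => (⟨Fin.cons p.2 ⇑p.1, hinj p hp⟩ : Fin (k + 1) ↪ Fin d))
      (fun ψ' _ => ⟨⟨fun i => ψ' i.succ, fun x y h => Fin.succ_injective _ (ψ'.injective h)⟩,
        ψ' 0⟩) (fun p hp => Finset.mem_univ _) ?_ ?_ ?_ ?_
    · intro ψ' _
      rw [Finset.mem_sigma]
      refine ⟨Finset.mem_univ _, ?_⟩
      rw [Finset.mem_compl, Finset.mem_image]
      rintro ⟨i, -, hi⟩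
      exact Fin.succ_ne_zero i (ψ'.injective hi)
    · intro p hp
      ext i
      · simp [Fin.cons_succ]
      · simp [Fin.cons_zero]
    · intro ψ' _
      ext i
      refine Fin.cases ?_ ?_ i
      · simp [Fin.cons_zero]
      · intro j; simp [Fin.cons_succ]; rfl
    · intro p hp
      rfl
  · rw [Finset.sum_comm]
    rfl

end Aux3

/-- Let `A` be a (not necessarily unital) associative `ℂ`-algebra acting on `W` via a
(non-unital) algebra homomorphism `ρ : A → End(W)`, with the Leibniz action on `W^{⊗d}`
extended to the universal enveloping algebra `U(A)` of `A` (with commutator bracket); the image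
of a monomial `a_1 * ⋯ * a_r ∈ U(A)` in `End(W^{⊗d})` is the composition of the derivation
actions of the `a_i`. Then the span `E` of the images of all elements of `U(A)` equals the
span `E_d` of the images of elements of degree at most `d`. -/
theorem span_all_eq_span_deg_le_d
    (A : Type) [NonUnitalRing A] [Module ℂ A] [SMulCommClass ℂ A A] [IsScalarTower ℂ A A]
    (W : Type) [AddCommGroup W] [Module ℂ W]
    (ρ : A →ₙₐ[ℂ] Module.End ℂ W) (d : ℕ) (hd : 1 ≤ d) :
    Submodule.span ℂ {g : Module.End ℂ (TPow W d) |
        ∃ l : List A, g = (l.map fun a => derAction W d (ρ a)).prod}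
      = Submodule.span ℂ {g : Module.End ℂ (TPow W d) |
        ∃ l : List A, l.length ≤ d ∧ g = (l.map fun a => derAction W d (ρ a)).prod} := by
  classical
  let E : ℕ → Submodule ℂ (Module.End ℂ (TPow W d)) := fun r =>
    Submodule.span ℂ {g | ∃ l : List A, l.length ≤ r ∧
      g = (l.map fun a => derAction W d (ρ a)).prod}
  have hEmono : ∀ {r s : ℕ}, r ≤ s → E r ≤ E s := fun {r s} hrs =>
    Submodule.span_mono (fun g hg => by
      obtain ⟨l, hl, hgl⟩ := hg; exact ⟨l, hl.trans hrs, hgl⟩)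
  have hmul : ∀ (c : A) (r : ℕ) (x), x ∈ E r → derAction W d (ρ c) * x ∈ E (r + 1) := by
    intro c r x hx
    induction hx using Submodule.span_induction with
    | mem g hg =>
      obtain ⟨l, hl, rfl⟩ := hg
      refine Submodule.subset_span ⟨c :: l, by simpa using hl, by simp⟩
    | zero => rw [mul_zero]; exact zero_mem _
    | add x y _ _ hx hy => rw [mul_add]; exact add_mem hx hy
    | smul t x _ hx => rw [mul_smul_comm]; exact Submodule.smul_mem _ t hx
  have hB : ∀ (k : ℕ) (b : Fin k → A), Pk W d k (fun i => ρ (b i)) ∈ E k := by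
    intro k
    induction k with
    | zero =>
      intro b
      rw [Pk_zero]
      exact Submodule.subset_span ⟨[], by simp, by simp⟩
    | succ k ih =>
      intro b
      have hb : (fun i => ρ (b i)) = Fin.cons (ρ (b 0)) (fun i : Fin k => ρ (b i.succ)) := by
        funext i; refine Fin.cases ?_ ?_ i <;> simp
      rw [hb]
      have h1 : Pk W d (k + 1) (Fin.cons (ρ (b 0)) fun i => ρ (b i.succ))
          = derAction W d (ρ (b 0)) * Pk W d k (fun i => ρ (b i.succ))
            - ∑ i : Fin k, Pk W d k (Function.update (fun i : Fin k => ρ (b i.succ)) i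
                (ρ (b 0) * ρ (b i.succ))) :=
        eq_sub_of_add_eq (derAction_mul_Pk W d (ρ (b 0)) k (fun i => ρ (b i.succ))).symm
      rw [h1]
      refine sub_mem (hmul _ _ _ (ih _)) (Submodule.sum_mem _ fun i _ => ?_)
      have h2 : Function.update (fun j : Fin k => ρ (b j.succ)) i (ρ (b 0) * ρ (b i.succ))
          = fun j => ρ ((Function.update (fun j : Fin k => b j.succ) i (b 0 * b i.succ)) j) := by
        funext j
        by_cases hj : j = i
        · subst hj; simp [map_mul]
        · simp [Function.update_apply, hj]
      rw [h2]
      exact hEmono (Nat.le_succ k) (ih _)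
  let F : Submodule ℂ (Module.End ℂ (TPow W d)) :=
    Submodule.span ℂ {g | ∃ (k : ℕ) (b : Fin k → A), g = Pk W d k fun i => ρ (b i)}
  have hFmul : ∀ (c : A) (x), x ∈ F → derAction W d (ρ c) * x ∈ F := by
    intro c x hx
    induction hx using Submodule.span_induction with
    | mem g hg =>
      obtain ⟨k, b, rfl⟩ := hg
      rw [derAction_mul_Pk]
      refine add_mem (Submodule.subset_span ⟨k + 1, Fin.cons c b, ?_⟩)
        (Submodule.sum_mem _ fun i _ =>
          Submodule.subset_span ⟨k, Function.update b i (c * b i), ?_⟩)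
      · congr 1
        funext i
        refine Fin.cases ?_ ?_ i <;> simp
      · congr 1
        funext j
        by_cases hj : j = i
        · subst hj; simp [map_mul]
        · simp [Function.update_apply, hj]
    | zero => rw [mul_zero]; exact zero_mem _
    | add x y _ _ hx hy => rw [mul_add]; exact add_mem hx hy
    | smul t x _ hx => rw [mul_smul_comm]; exact Submodule.smul_mem _ t hx
  have hA : ∀ l : List A, (l.map fun a => derAction W d (ρ a)).prod ∈ F := by
    intro l
    induction l with
    | nil =>
      exact Submodule.subset_span ⟨0, Fin.elim0, by simp [Pk_zero]⟩
    | cons c l ih =>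
      rw [List.map_cons, List.prod_cons]
      exact hFmul c _ ih
  apply le_antisymm
  · rw [Submodule.span_le]
    rintro g ⟨l, rfl⟩
    have hFE : F ≤ E d := by
      rw [Submodule.span_le]
      rintro g ⟨k, b, rfl⟩
      by_cases hk : k ≤ d
      · exact hEmono hk (hB k b)
      · rw [Pk_eq_zero W d (by omega)]
        exact zero_mem _
    exact hFE (hA l)
  · exact Submodule.span_mono fun g hg => by
      obtain ⟨l, _, hgl⟩ := hg; exact ⟨l, hgl⟩
end

section
/- Let A be an associative ℂ-algebra acting on a vector space W, and extend the action to the symmetric power Sym^d(W) by derivations, then to the universal enveloping algebra U(A) of the underlying Lie algebra of A. Let f ∈ Sym^d(W) and let M ⊂ Sym^d(W) be the cyclic U(A)-submodule generated by f. Then M is spanned by the elements μ·f where μ ranges over elements of U(A) of degree at most d. -/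
set_option linter.unusedSectionVars false


open scoped TensorProduct

/-- The submodule of symmetrization relations `t − σ·t`, so that
`Sym^d(W) = W^{⊗d} / symRel`. -/
noncomputable def symRel (W : Type) [AddCommGroup W] [Module ℂ W] (d : ℕ) :
    Submodule ℂ (TPow W d) :=
  Submodule.span ℂ {x | ∃ (σ : Equiv.Perm (Fin d)) (t : TPow W d),
    x = t - PiTensorProduct.reindex ℂ (fun _ : Fin d => W) σ t}

/-- The `d`-th symmetric power `Sym^d(W)` as a quotient of `W^{⊗d}`. -/
abbrev SymPow (W : Type) [AddCommGroup W] [Module ℂ W] (d : ℕ) : Type :=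
  TPow W d ⧸ symRel W d

section Aux

variable {A : Type} [NonUnitalRing A] [Module ℂ A] [SMulCommClass ℂ A A] [IsScalarTower ℂ A A]
variable {W : Type} [AddCommGroup W] [Module ℂ W]
variable (ρ : A →ₙₐ[ℂ] Module.End ℂ W) (d : ℕ)

/-- Place `ρ (c j)` at position `g j` (distinct positions), identity elsewhere. -/
noncomputable def Eop {n : ℕ} (g : Fin n ↪ Fin d) (c : Fin n → A) : Module.End ℂ (TPow W d) :=
  PiTensorProduct.map (fun i =>
    Function.extend g (fun j => (ρ (c j) : W →ₗ[ℂ] W)) (fun _ => (LinearMap.id : W →ₗ[ℂ] W)) i)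

/-- Sum over all injective placements. -/
noncomputable def Tsum {n : ℕ} (c : Fin n → A) : Module.End ℂ (TPow W d) :=
  ∑ g : Fin n ↪ Fin d, Eop ρ d g c

/-- Product of derivation actions along a list. -/
noncomputable def Pop (l : List A) : Module.End ℂ (TPow W d) :=
  (l.map fun a => derAction W d (ρ a)).prod

/-- One derivation factor composed with an injective placement. -/
noncomputable def Fop {n : ℕ} (a : A) (c : Fin n → A) (g : Fin n ↪ Fin d) (i : Fin d) :
    Module.End ℂ (TPow W d) :=
  PiTensorProduct.map (fun k =>
    (Function.update (fun _ : Fin d => (LinearMap.id : W →ₗ[ℂ] W)) i (ρ a) k) ∘ₗ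
      Function.extend g (fun j => (ρ (c j) : W →ₗ[ℂ] W))
        (fun _ => (LinearMap.id : W →ₗ[ℂ] W)) k)

lemma Pop_nil : Pop ρ d ([] : List A) = 1 := by simp [Pop]

lemma Pop_cons (a : A) (l : List A) :
    Pop ρ d (a :: l) = derAction W d (ρ a) * Pop ρ d l := by
  simp [Pop]

lemma Top_nil (c : Fin 0 → A) : Tsum ρ d c = 1 := by
  haveI : Unique (Fin 0 ↪ Fin d) :=
    ⟨⟨⟨Fin.elim0, fun x => x.elim0⟩⟩, fun g => by ext x; exact x.elim0⟩
  rw [Tsum, Fintype.sum_unique]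
  have h : (fun i => Function.extend (⇑(default : Fin 0 ↪ Fin d))
      (fun j => (ρ (c j) : W →ₗ[ℂ] W)) (fun _ => (LinearMap.id : W →ₗ[ℂ] W)) i)
      = fun _ : Fin d => (LinearMap.id : W →ₗ[ℂ] W) := by
    funext i
    exact Function.extend_apply' _ _ _ (by rintro ⟨j, -⟩; exact j.elim0)
  rw [Eop, h, PiTensorProduct.map_id]
  rfl

lemma Top_zero {n : ℕ} (h : d < n) (c : Fin n → A) : Tsum ρ d c = 0 := by
  haveI : IsEmpty (Fin n ↪ Fin d) := by
    constructor
    intro g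
    have := Fintype.card_le_of_embedding g
    simp only [Fintype.card_fin] at this
    omega
  rw [Tsum, Finset.univ_eq_empty, Finset.sum_empty]

lemma Mi_mul_Eop {n : ℕ} (a : A) (c : Fin n → A) (g : Fin n ↪ Fin d) (i : Fin d) :
    (PiTensorProduct.map
        (Function.update (fun _ : Fin d => (LinearMap.id : W →ₗ[ℂ] W)) i (ρ a))) *
      Eop ρ d g c = Fop ρ d a c g i := by
  rw [Eop, Fop, PiTensorProduct.map_comp]
  rfl

lemma Fop_image {n : ℕ} (a : A) (c : Fin n → A) (g : Fin n ↪ Fin d) (j : Fin n) :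
    Fop ρ d a c g (g j) = Eop ρ d g (Function.update c j (a * c j)) := by
  rw [Fop, Eop]
  congr 1
  funext k
  by_cases h : ∃ j', g j' = k
  · obtain ⟨j', rfl⟩ := h
    by_cases hj : j' = j
    · subst hj
      rw [Function.update_self, g.injective.extend_apply, g.injective.extend_apply,
        Function.update_self, map_mul]
      rfl
    · rw [Function.update_of_ne (fun e => hj (g.injective e)),
        g.injective.extend_apply, g.injective.extend_apply,
        Function.update_of_ne hj, LinearMap.id_comp]
  · have hk : k ≠ g j := fun e => h ⟨j, e.symm⟩
    rw [Function.extend_apply' _ _ _ h, Function.extend_apply' _ _ _ h,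
      Function.update_of_ne hk, LinearMap.id_comp]

lemma Fop_cons {n : ℕ} (a : A) (c : Fin n → A) (g : Fin n ↪ Fin d) (i : Fin d)
    (hi : ∀ j, g j ≠ i) :
    Fop ρ d a c g i =
      Eop ρ d ⟨Fin.cons i ⇑g,
        Fin.cons_injective_of_injective (by rintro ⟨j, hj⟩; exact hi j hj) g.injective⟩
        (Fin.cons a c) := by
  have hinj : Function.Injective (Fin.cons i ⇑g : Fin (n + 1) → Fin d) :=
    Fin.cons_injective_of_injective (by rintro ⟨j, hj⟩; exact hi j hj) g.injective
  rw [Fop, Eop]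
  congr 1
  funext k
  simp only [Function.Embedding.coeFn_mk]
  by_cases h : ∃ j, g j = k
  · obtain ⟨j, rfl⟩ := h
    rw [Function.update_of_ne (hi j), g.injective.extend_apply, LinearMap.id_comp]
    have h2 := hinj.extend_apply (fun j' : Fin (n + 1) => (ρ ((Fin.cons a c : Fin (n + 1) → A) j') : W →ₗ[ℂ] W))
      (fun _ => (LinearMap.id : W →ₗ[ℂ] W)) j.succ
    simp only [Fin.cons_succ] at h2
    exact h2.symm
  · by_cases hk : k = i
    · subst hk
      rw [Function.update_self, Function.extend_apply' _ _ _ h, LinearMap.comp_id]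
      have h2 := hinj.extend_apply (fun j' : Fin (n + 1) => (ρ ((Fin.cons a c : Fin (n + 1) → A) j') : W →ₗ[ℂ] W))
        (fun _ => (LinearMap.id : W →ₗ[ℂ] W)) 0
      simp only [Fin.cons_zero] at h2
      exact h2.symm
    · rw [Function.update_of_ne hk, Function.extend_apply' _ _ _ h, LinearMap.id_comp]
      rw [Function.extend_apply']
      rintro ⟨j', hj'⟩
      revert hj'
      refine Fin.cases ?_ (fun j => ?_) j'
      · rw [Fin.cons_zero]
        exact fun e => hk e.symm
      · rw [Fin.cons_succ]
        exact fun e => h ⟨j, e⟩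

lemma derAction_mul_Top {n : ℕ} (a : A) (c : Fin n → A) :
    derAction W d (ρ a) * Tsum ρ d c =
      Tsum ρ d (Fin.cons a c) + ∑ j : Fin n, Tsum ρ d (Function.update c j (a * c j)) := by
  classical
  have step1 : derAction W d (ρ a) * Tsum ρ d c =
      ∑ g : Fin n ↪ Fin d, ∑ i : Fin d, Fop ρ d a c g i := by
    rw [derAction, Tsum, Finset.sum_mul_sum, Finset.sum_comm]
    exact Finset.sum_congr rfl fun g _ => Finset.sum_congr rfl fun i _ => Mi_mul_Eop ρ d a c g i
  have step2 : ∀ g : Fin n ↪ Fin d, ∑ i : Fin d, Fop ρ d a c g i =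
      (∑ j : Fin n, Eop ρ d g (Function.update c j (a * c j))) +
        ∑ i ∈ (Finset.univ.map g)ᶜ, Fop ρ d a c g i := by
    intro g
    rw [← Finset.sum_add_sum_compl (Finset.univ.map g) (Fop ρ d a c g)]
    congr 1
    rw [Finset.sum_map]
    exact Finset.sum_congr rfl fun j _ => Fop_image ρ d a c g j
  have step3 : ∑ g : Fin n ↪ Fin d, ∑ i ∈ (Finset.univ.map g)ᶜ, Fop ρ d a c g i =
      Tsum ρ d (Fin.cons a c) := by
    rw [Tsum, Finset.sum_sigma']
    refine Finset.sum_bij'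
      (fun p hp => (⟨Fin.cons p.2 ⇑p.1, Fin.cons_injective_of_injective
        (by
          rintro ⟨j, hj⟩
          have h2 := (Finset.mem_sigma.1 hp).2
          rw [Finset.mem_compl, Finset.mem_map] at h2
          exact h2 ⟨j, Finset.mem_univ _, hj⟩)
        p.1.injective⟩ : Fin (n + 1) ↪ Fin d))
      (fun g' _ => ⟨(Fin.succEmb n).trans g', g' 0⟩) ?_ ?_ ?_ ?_ ?_
    · intro p hp; exact Finset.mem_univ _
    · intro g' _
      refine Finset.mem_sigma.2 ⟨Finset.mem_univ _, ?_⟩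
      rw [Finset.mem_compl, Finset.mem_map]
      rintro ⟨j, -, hj⟩
      exact (Fin.succ_ne_zero j) (g'.injective hj)
    · intro p hp
      refine Sigma.ext ?_ ?_
      · ext j
        simp [Fin.succEmb]
      · simp
    · intro g' _
      ext k
      refine Fin.cases ?_ (fun j => ?_) k
      · simp
      · simp [Fin.succEmb]
    · intro p hp
      refine Fop_cons ρ d a c p.1 p.2 ?_
      intro j hj
      have h2 := (Finset.mem_sigma.1 hp).2
      rw [Finset.mem_compl, Finset.mem_map] at h2
      exact h2 ⟨j, Finset.mem_univ _, hj⟩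
  calc derAction W d (ρ a) * Tsum ρ d c
      = ∑ g : Fin n ↪ Fin d, ∑ i : Fin d, Fop ρ d a c g i := step1
    _ = ∑ g : Fin n ↪ Fin d,
          ((∑ j : Fin n, Eop ρ d g (Function.update c j (a * c j))) +
            ∑ i ∈ (Finset.univ.map g)ᶜ, Fop ρ d a c g i) :=
        Finset.sum_congr rfl fun g _ => step2 g
    _ = Tsum ρ d (Fin.cons a c) + ∑ j : Fin n, Tsum ρ d (Function.update c j (a * c j)) := by
        rw [Finset.sum_add_distrib, step3, Finset.sum_comm, add_comm]
        rfl

lemma Top_mem (n : ℕ) (c : Fin n → A) :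
    Tsum ρ d c ∈ Submodule.span ℂ
      {F : Module.End ℂ (TPow W d) | ∃ l : List A, l.length ≤ n ∧ F = Pop ρ d l} := by
  induction n with
  | zero =>
    exact Submodule.subset_span ⟨[], by simp, by rw [Top_nil, Pop_nil]⟩
  | succ n ih =>
    have key := derAction_mul_Top ρ d (c 0) (Fin.tail c)
    rw [Fin.cons_self_tail] at key
    have hc : Tsum ρ d c = derAction W d (ρ (c 0)) * Tsum ρ d (Fin.tail c)
        - ∑ j : Fin n, Tsum ρ d (Function.update (Fin.tail c) j (c 0 * Fin.tail c j)) :=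
      eq_sub_of_add_eq key.symm
    rw [hc]
    refine sub_mem ?_ (Submodule.sum_mem _ fun j _ => ?_)
    · have h1 := Submodule.apply_mem_span_image_of_mem_span
        (LinearMap.mulLeft ℂ (derAction W d (ρ (c 0)))) (ih (Fin.tail c))
      refine Submodule.span_le.2 ?_ h1
      rintro _ ⟨F, ⟨l, hl, rfl⟩, rfl⟩
      refine Submodule.subset_span ⟨c 0 :: l, by simpa using Nat.succ_le_succ hl, ?_⟩
      rw [Pop_cons]
      rfl
    · refine Submodule.span_mono ?_ (ih _)
      rintro F ⟨l, hl, hF⟩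
      exact ⟨l, hl.trans (Nat.le_succ n), hF⟩

lemma listget_cons (a : A) (l : List A) :
    (fun j : Fin (a :: l).length => (a :: l).get j)
      = Fin.cons a (fun j : Fin l.length => l.get j) := by
  funext j
  refine Fin.cases ?_ (fun j => ?_) j <;> simp

lemma Pop_sub_Top (l : List A) :
    Pop ρ d l - Tsum ρ d (fun j : Fin l.length => l.get j) ∈
      Submodule.span ℂ {F : Module.End ℂ (TPow W d) |
        ∃ m : List A, m.length < l.length ∧ F = Pop ρ d m} := by
  induction l with
  | nil =>
    rw [Pop_nil, Top_nil]
    simp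
  | cons a l ih =>
    have key := derAction_mul_Top ρ d a (fun j : Fin l.length => l.get j)
    have hrw : Pop ρ d (a :: l) - Tsum ρ d (fun j : Fin (a :: l).length => (a :: l).get j)
        = derAction W d (ρ a) * (Pop ρ d l - Tsum ρ d (fun j : Fin l.length => l.get j))
          + ∑ j : Fin l.length,
              Tsum ρ d (Function.update (fun j : Fin l.length => l.get j) j (a * l.get j)) := by
      rw [Pop_cons, listget_cons, mul_sub, key]
      abel
    rw [hrw]
    refine add_mem ?_ (Submodule.sum_mem _ fun j _ => ?_)
    · have h1 := Submodule.apply_mem_span_image_of_mem_span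
        (LinearMap.mulLeft ℂ (derAction W d (ρ a))) ih
      refine Submodule.span_le.2 ?_ h1
      rintro _ ⟨F, ⟨m, hm, rfl⟩, rfl⟩
      refine Submodule.subset_span ⟨a :: m, by simpa using Nat.succ_lt_succ hm, ?_⟩
      rw [Pop_cons]
      rfl
    · refine Submodule.span_mono ?_ (Top_mem ρ d l.length _)
      rintro F ⟨m, hm, hF⟩
      exact ⟨m, by simpa using Nat.lt_succ_of_le hm, hF⟩

lemma Pop_mem_span (N : ℕ) : ∀ l : List A, l.length ≤ N →
    Pop ρ d l ∈ Submodule.span ℂ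
      {F : Module.End ℂ (TPow W d) | ∃ m : List A, m.length ≤ d ∧ F = Pop ρ d m} := by
  induction N with
  | zero =>
    intro l hl
    exact Submodule.subset_span ⟨l, by omega, rfl⟩
  | succ N ih =>
    intro l hl
    by_cases hld : l.length ≤ d
    · exact Submodule.subset_span ⟨l, hld, rfl⟩
    · have hz : Tsum ρ d (fun j : Fin l.length => l.get j) = 0 := Top_zero ρ d (by omega) _
      have hmem := Pop_sub_Top ρ d l
      rw [hz, sub_zero] at hmem
      refine Submodule.span_le.2 ?_ hmem
      rintro F ⟨m, hm, rfl⟩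
      exact ih m (by omega)

end Aux

/-- Let `A` be an associative `ℂ`-algebra acting on `W`, with the derivation action on
`Sym^d(W)` extended to `U(A)` (monomials of `U(A)` act by composites of derivation actions,
computed on lifts to `W^{⊗d}` and pushed down to the quotient `Sym^d(W)`). If `f ∈ Sym^d(W)`
(a class of `f̃ ∈ W^{⊗d}`), then the cyclic `U(A)`-module generated by `f` is spanned by the
elements `μ·f` with `μ ∈ U(A)` of degree at most `d`. -/
theorem cyclic_module_spanned_by_deg_le_d
    (A : Type) [NonUnitalRing A] [Module ℂ A] [SMulCommClass ℂ A A] [IsScalarTower ℂ A A]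
    (W : Type) [AddCommGroup W] [Module ℂ W]
    (ρ : A →ₙₐ[ℂ] Module.End ℂ W) (d : ℕ) (ftilde : TPow W d) :
    Submodule.span ℂ {y : SymPow W d |
        ∃ l : List A, y = (symRel W d).mkQ ((l.map fun a => derAction W d (ρ a)).prod ftilde)}
      = Submodule.span ℂ {y : SymPow W d |
        ∃ l : List A, l.length ≤ d ∧
          y = (symRel W d).mkQ ((l.map fun a => derAction W d (ρ a)).prod ftilde)} := by
  refine le_antisymm ?_ (Submodule.span_mono ?_)
  swap
  · rintro y ⟨l, -, hy⟩
    exact ⟨l, hy⟩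
  rw [Submodule.span_le]
  rintro y ⟨l, rfl⟩
  have hφ : ∃ φ : Module.End ℂ (TPow W d) →ₗ[ℂ] SymPow W d,
      ∀ F : Module.End ℂ (TPow W d), φ F = (symRel W d).mkQ (F ftilde) :=
    ⟨(symRel W d).mkQ ∘ₗ LinearMap.applyₗ (R := ℂ) ftilde, fun F => rfl⟩
  obtain ⟨φ, hφ⟩ := hφ
  have h := Submodule.apply_mem_span_image_of_mem_span φ (Pop_mem_span ρ d l.length l le_rfl)
  have hy : (symRel W d).mkQ ((l.map fun a => derAction W d (ρ a)).prod ftilde)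
      = φ (Pop ρ d l) := (hφ _).symm
  rw [hy]
  refine Submodule.span_le.2 ?_ h
  rintro _ ⟨F, ⟨m, hm, rfl⟩, rfl⟩
  exact Submodule.subset_span ⟨m, hm, (hφ _).symm ▸ rfl⟩
end

section
/- For any integers r ≥ 1 and m ≥ 1, the matrix T(r,m) with entries T(r,m)_{ij} = (r+i+j)!/(r+i)! for 0 ≤ i,j ≤ m satisfies: subtracting row i from row i+1 for each i transforms T(r,m) into a block matrix of the form [[1, *],[0, S]] where S is column-equivalent to T(r+1, m-1); consequently det T(r,m) ≠ 0 by induction. -/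
/-- The matrix `T(r,m)` with entries `T(r,m)_{ij} = (r+i+j)!/(r+i)!` for `0 ≤ i,j ≤ m`. -/
noncomputable def Tmat (r m : ℕ) : Matrix (Fin (m + 1)) (Fin (m + 1)) ℚ :=
  Matrix.of fun i j => ((r + (i : ℕ) + (j : ℕ)).factorial : ℚ) / ((r + (i : ℕ)).factorial : ℚ)

/-- The row-operation matrix which subtracts row `i` from row `i+1`, for each `i`. -/
noncomputable def Lmat (m : ℕ) : Matrix (Fin (m + 1)) (Fin (m + 1)) ℚ :=
  Matrix.of fun i j => if j = i then 1 else if (i : ℕ) = (j : ℕ) + 1 then -1 else 0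

lemma LT_zero (r m : ℕ) (j : Fin (m + 2)) :
    (Lmat (m + 1) * Tmat r (m + 1)) 0 j = Tmat r (m + 1) 0 j := by
  rw [Matrix.mul_apply]
  have : ∀ k : Fin (m + 2), Lmat (m + 1) 0 k * Tmat r (m + 1) k j
      = if k = 0 then Tmat r (m + 1) k j else 0 := by
    intro k
    simp only [Lmat, Matrix.of_apply]
    rcases eq_or_ne k 0 with h | h
    · simp [h]
    · rw [if_neg h, if_neg (by simp), zero_mul, if_neg h]
  simp only [this, Finset.sum_ite_eq' , Finset.mem_univ, if_true]

lemma LT_succ (r m : ℕ) (i : Fin (m + 1)) (j : Fin (m + 2)) :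
    (Lmat (m + 1) * Tmat r (m + 1)) i.succ j
      = Tmat r (m + 1) i.succ j - Tmat r (m + 1) i.castSucc j := by
  rw [Matrix.mul_apply]
  have : ∀ k : Fin (m + 2), Lmat (m + 1) i.succ k * Tmat r (m + 1) k j
      = (if k = i.succ then Tmat r (m + 1) k j else 0)
        + (if k = i.castSucc then -Tmat r (m + 1) k j else 0) := by
    intro k
    simp only [Lmat, Matrix.of_apply]
    rcases eq_or_ne k i.succ with h | h
    · subst h
      have h2 : i.succ ≠ i.castSucc := (Fin.castSucc_lt_succ (i := i)).ne'
      rw [if_pos rfl, if_pos rfl, one_mul, if_neg h2, add_zero]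
    · rw [if_neg h, if_neg h]
      rcases eq_or_ne k i.castSucc with h2 | h2
      · have : (i.succ : ℕ) = (k : ℕ) + 1 := by subst h2; simp
        rw [if_pos this, if_pos h2]; ring
      · have : (i.succ : ℕ) ≠ (k : ℕ) + 1 := by
          intro h3
          apply h2
          apply Fin.ext
          simp only [Fin.val_succ] at h3
          simp only [Fin.coe_castSucc]
          omega
        rw [if_neg this, if_neg h2, zero_mul, zero_add]
  rw [Finset.sum_congr rfl (fun k _ => this k), Finset.sum_add_distrib]
  simp [Finset.sum_ite_eq', sub_eq_add_neg]

lemma key (a j : ℕ) :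
    ((a + 1 + j + 1).factorial : ℚ) / ((a + 1).factorial : ℚ)
      - ((a + j + 1).factorial : ℚ) / ((a).factorial : ℚ)
      = ((a + 1 + j).factorial : ℚ) / ((a + 1).factorial : ℚ) * ((j : ℚ) + 1) := by
  have h2 : a + j + 1 = a + 1 + j := by ring
  rw [show a + 1 + j + 1 = (a + 1 + j) + 1 from rfl, Nat.factorial_succ, h2,
    Nat.factorial_succ a]
  have hfa : ((a.factorial : ℚ)) ≠ 0 := Nat.cast_ne_zero.2 a.factorial_ne_zero
  have hfa1 : ((a:ℚ) + 1) ≠ 0 := by positivity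
  field_simp
  push_cast
  ring

lemma S_eq (r m : ℕ) (i j : Fin (m + 1)) :
    (Lmat (m + 1) * Tmat r (m + 1)) i.succ j.succ
      = Tmat (r + 1) m i j * ((j : ℚ) + 1) := by
  rw [LT_succ]
  simp only [Tmat, Matrix.of_apply, Fin.val_succ, Fin.coe_castSucc]
  have e1 : r + ((i:ℕ) + 1) + ((j:ℕ) + 1) = (r + (i:ℕ)) + 1 + (j:ℕ) + 1 := by ring
  have e2 : r + ((i:ℕ) + 1) = (r + (i:ℕ)) + 1 := by ring
  have e3 : r + (i:ℕ) + ((j:ℕ) + 1) = (r + (i:ℕ)) + (j:ℕ) + 1 := by ring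
  have e4 : r + 1 + (i:ℕ) + (j:ℕ) = (r + (i:ℕ)) + 1 + (j:ℕ) := by ring
  have e5 : r + 1 + (i:ℕ) = (r + (i:ℕ)) + 1 := by ring
  rw [e1, e2, e3, e4, e5, key]

lemma Tmat_det_ne (m : ℕ) : ∀ r : ℕ, (Tmat r m).det ≠ 0 := by
  induction m with
  | zero =>
    intro r
    rw [Matrix.det_fin_one]
    simp only [Tmat, Matrix.of_apply]
    norm_num
    exact Nat.cast_ne_zero.2 (r + 0).factorial_ne_zero
  | succ m ih =>
    intro r
    have hL : (Lmat (m + 1)).det = 1 := by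
      rw [Matrix.det_of_lowerTriangular (Lmat (m + 1))]
      · simp [Lmat]
      · intro i j hij
        have hv : (i : ℕ) < (j : ℕ) := hij
        simp only [Lmat, Matrix.of_apply]
        rw [if_neg (by rintro rfl; exact lt_irrefl _ hv), if_neg (by omega)]
    have hdet : (Tmat r (m + 1)).det = (Lmat (m + 1) * Tmat r (m + 1)).det := by
      rw [Matrix.det_mul, hL, one_mul]
    rw [hdet, Matrix.det_succ_column_zero, Fin.sum_univ_succ]
    have h0 : (Lmat (m + 1) * Tmat r (m + 1)) 0 0 = 1 := by
      rw [LT_zero]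
      simp only [Tmat, Matrix.of_apply, Fin.val_zero, add_zero]
      exact div_self (Nat.cast_ne_zero.2 (Nat.factorial_ne_zero _))
    have hz : ∀ i : Fin (m + 1), (Lmat (m + 1) * Tmat r (m + 1)) i.succ 0 = 0 := by
      intro i
      rw [LT_succ]
      simp only [Tmat, Matrix.of_apply, Fin.val_succ, Fin.coe_castSucc, Fin.val_zero,
        add_zero]
      rw [div_self (Nat.cast_ne_zero.2 (Nat.factorial_ne_zero _)),
        div_self (Nat.cast_ne_zero.2 (Nat.factorial_ne_zero _)), sub_self]
    simp only [hz, h0, Fin.val_zero, pow_zero, one_mul, mul_zero, zero_mul,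
      Finset.sum_const_zero, add_zero, Fin.val_succ]
    have hsub : ((Lmat (m + 1) * Tmat r (m + 1)).submatrix (Fin.succAbove 0) Fin.succ)
        = Tmat (r + 1) m * Matrix.diagonal (fun j : Fin (m + 1) => ((j : ℕ) : ℚ) + 1) := by
      ext i j
      rw [Matrix.submatrix_apply, Fin.succAbove_zero, Matrix.mul_diagonal]
      exact S_eq r m i j
    rw [hsub, Matrix.det_mul, Matrix.det_diagonal]
    apply mul_ne_zero (ih (r + 1))
    apply Finset.prod_ne_zero_iff.2
    intro j _
    positivity

/-- For `r ≥ 1` and `m ≥ 1` (here `m = m' + 1`), subtracting row `i` from row `i+1` of `T(r,m)`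
transforms it into a block matrix `[[1, *],[0, S]]` whose lower-right block `S` is
column-equivalent to `T(r+1, m-1)`; consequently `det T(r,m) ≠ 0`. -/
theorem Tmat_rowreduce (r m' : ℕ) (hr : 1 ≤ r) :
    (Lmat (m' + 1) * Tmat r (m' + 1)) 0 0 = 1 ∧
    (∀ i : Fin (m' + 1), (Lmat (m' + 1) * Tmat r (m' + 1)) i.succ 0 = 0) ∧
    (∃ E : Matrix (Fin (m' + 1)) (Fin (m' + 1)) ℚ, IsUnit E ∧
      (Matrix.of fun i j : Fin (m' + 1) =>
        (Lmat (m' + 1) * Tmat r (m' + 1)) i.succ j.succ) = Tmat (r + 1) m' * E) ∧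
    (Tmat r (m' + 1)).det ≠ 0 := by
  refine ⟨?_, ?_, ⟨Matrix.diagonal (fun j : Fin (m' + 1) => ((j : ℕ) : ℚ) + 1), ?_, ?_⟩,
    Tmat_det_ne (m' + 1) r⟩
  · rw [LT_zero]
    simp only [Tmat, Matrix.of_apply, Fin.val_zero, add_zero]
    exact div_self (Nat.cast_ne_zero.2 (Nat.factorial_ne_zero _))
  · intro i
    rw [LT_succ]
    simp only [Tmat, Matrix.of_apply, Fin.val_succ, Fin.coe_castSucc, Fin.val_zero, add_zero]
    rw [div_self (Nat.cast_ne_zero.2 (Nat.factorial_ne_zero _)),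
      div_self (Nat.cast_ne_zero.2 (Nat.factorial_ne_zero _)), sub_self]
  · rw [Matrix.isUnit_iff_isUnit_det, Matrix.det_diagonal, isUnit_iff_ne_zero]
    apply Finset.prod_ne_zero_iff.2
    intro j _
    positivity
  · ext i j
    rw [Matrix.of_apply, Matrix.mul_diagonal]
    exact S_eq r m' i j
end

section
/- For m ≥ 0 and w ≥ 1, the (2m+2)×(2m+2) block matrix M^w = [[A, B],[C, D]], where A, B, C, D are (m+1)×(m+1) matrices with entries A_{ij} = μ^w_{j,i}, B_{ij} = μ^w_{m+1+j,i}, C_{ij} = λ^w_{j,i}, D_{ij} = λ^w_{m+1+j,i} for 0 ≤ i,j ≤ m, where λ^w_{k,l} = −l!/(l−k)! if l ≥ k and 0 otherwise, and μ^w_{k,l} = (−1)^{w+k}(w+k+l)!/(l+w)!, is invertible. -/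
/-- `λ^w_{k,l} = −l!/(l−k)!` if `l ≥ k` and `0` otherwise. -/
noncomputable def lamQ (w k l : ℕ) : ℚ :=
  if k ≤ l then -((l.factorial : ℚ) / ((l - k).factorial : ℚ)) else 0

/-- `μ^w_{k,l} = (−1)^{w+k}(w+k+l)!/(l+w)!`. -/
noncomputable def muQ (w k l : ℕ) : ℚ :=
  (-1 : ℚ) ^ (w + k) * ((w + k + l).factorial : ℚ) / ((l + w).factorial : ℚ)

/-- The block matrix `M^w = [[A, B],[C, D]]` with `A_{ij} = μ^w_{j,i}`, `B_{ij} = μ^w_{m+1+j,i}`,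
`C_{ij} = λ^w_{j,i}`, `D_{ij} = λ^w_{m+1+j,i}` for `0 ≤ i,j ≤ m`. -/
noncomputable def Mmat (w m : ℕ) :
    Matrix (Fin (m + 1) ⊕ Fin (m + 1)) (Fin (m + 1) ⊕ Fin (m + 1)) ℚ :=
  Matrix.fromBlocks
    (Matrix.of fun i j : Fin (m + 1) => muQ w (j : ℕ) (i : ℕ))
    (Matrix.of fun i j : Fin (m + 1) => muQ w (m + 1 + (j : ℕ)) (i : ℕ))
    (Matrix.of fun i j : Fin (m + 1) => lamQ w (j : ℕ) (i : ℕ))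
    (Matrix.of fun i j : Fin (m + 1) => lamQ w (m + 1 + (j : ℕ)) (i : ℕ))

open Polynomial Finset

lemma fact_prod (w m i j : ℕ) :
    (w + m + 1 + j + i).factorial
      = (w + m + 1 + i).factorial * ∏ t ∈ range j, (i + w + m + 2 + t) := by
  induction j with
  | zero => simp
  | succ j ih =>
      rw [prod_range_succ, ← mul_assoc, ← ih]
      have : w + m + 1 + (j + 1) + i = (w + m + 1 + j + i) + 1 := by ring
      rw [this, Nat.factorial_succ]
      ring

lemma detB_ne (w m : ℕ) :
    (Matrix.of fun i j : Fin (m + 1) => muQ w (m + 1 + (j : ℕ)) (i : ℕ)).det ≠ 0 := by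
  set p : Fin (m + 1) → ℚ[X] := fun j => ∏ t ∈ range (j : ℕ), (X + C ((m + 2 + t : ℕ) : ℚ))
  have hmonic : ∀ j, (p j).Monic := fun j =>
    monic_prod_of_monic _ _ fun t _ => monic_X_add_C _
  have hdeg : ∀ j : Fin (m + 1), (p j).natDegree = (j : ℕ) := by
    intro j
    rw [natDegree_prod _ _ fun t _ => (monic_X_add_C _).ne_zero]
    simp only [natDegree_X_add_C]
    simp
  have key : (Matrix.of fun i j : Fin (m + 1) => muQ w (m + 1 + (j : ℕ)) (i : ℕ))
      = Matrix.of fun i j : Fin (m + 1) =>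
          (((w + m + 1 + (i : ℕ)).factorial : ℚ) / (((i : ℕ) + w).factorial : ℚ)) *
          (((-1 : ℚ) ^ (w + m + 1 + (j : ℕ))) *
            (p j).eval (((i : ℕ) + w : ℕ) : ℚ)) := by
    ext i j
    have hev : (p j).eval (((i : ℕ) + w : ℕ) : ℚ)
        = ((∏ t ∈ range (j : ℕ), ((i : ℕ) + w + m + 2 + t) : ℕ) : ℚ) := by
      rw [eval_prod, Nat.cast_prod]
      refine Finset.prod_congr rfl fun t _ => ?_
      simp only [eval_add, eval_X, eval_C]
      push_cast
      ring
    simp only [Matrix.of_apply, muQ, hev]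
    have hfac := fact_prod w m (i : ℕ) (j : ℕ)
    have harr : w + (m + 1 + (j : ℕ)) + (i : ℕ) = w + m + 1 + (j : ℕ) + (i : ℕ) := by ring
    have harr2 : w + (m + 1 + (j : ℕ)) = w + m + 1 + (j : ℕ) := by ring
    rw [harr, harr2, hfac]
    have h1 : (((i : ℕ) + w).factorial : ℚ) ≠ 0 := Nat.cast_ne_zero.2 (Nat.factorial_ne_zero _)
    push_cast
    field_simp
  rw [key]
  have : (Matrix.of fun i j : Fin (m + 1) =>
          (((w + m + 1 + (i : ℕ)).factorial : ℚ) / (((i : ℕ) + w).factorial : ℚ)) *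
          (((-1 : ℚ) ^ (w + m + 1 + (j : ℕ))) *
            (p j).eval (((i : ℕ) + w : ℕ) : ℚ))).det
      = (∏ i : Fin (m+1), (((w + m + 1 + (i : ℕ)).factorial : ℚ) / (((i : ℕ) + w).factorial : ℚ)))
        * ((∏ j : Fin (m+1), ((-1 : ℚ) ^ (w + m + 1 + (j : ℕ))))
          * (Matrix.of fun i j : Fin (m + 1) =>
              (p j).eval (((i : ℕ) + w : ℕ) : ℚ)).det) := by
    refine (Matrix.det_mul_column (fun i : Fin (m + 1) =>
      (((w + m + 1 + (i : ℕ)).factorial : ℚ) / (((i : ℕ) + w).factorial : ℚ)))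
      (Matrix.of fun i j : Fin (m + 1) => ((-1 : ℚ) ^ (w + m + 1 + (j : ℕ))) *
        (p j).eval (((i : ℕ) + w : ℕ) : ℚ))).trans ?_
    congr 1
    exact Matrix.det_mul_row (fun j : Fin (m + 1) => ((-1 : ℚ) ^ (w + m + 1 + (j : ℕ))))
      (Matrix.of fun i j : Fin (m + 1) => (p j).eval (((i : ℕ) + w : ℕ) : ℚ))
  rw [this]
  have hvand : (Matrix.of fun i j : Fin (m + 1) =>
      (p j).eval (((i : ℕ) + w : ℕ) : ℚ)).det
      = (Matrix.vandermonde fun i : Fin (m+1) => (((i : ℕ) + w : ℕ) : ℚ)).det := by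
    exact (Matrix.det_eval_matrixOfPolynomials_eq_det_vandermonde _ _ hdeg hmonic).symm
  rw [hvand]
  refine mul_ne_zero ?_ (mul_ne_zero ?_ ?_)
  · exact Finset.prod_ne_zero_iff.2 fun i _ => div_ne_zero
      (Nat.cast_ne_zero.2 (Nat.factorial_ne_zero _)) (Nat.cast_ne_zero.2 (Nat.factorial_ne_zero _))
  · exact Finset.prod_ne_zero_iff.2 fun i _ => pow_ne_zero _ (by norm_num)
  · rw [Matrix.det_vandermonde_ne_zero_iff]
    intro a b hab
    have hab' : ((((a : ℕ) + w : ℕ)) : ℚ) = (((b : ℕ) + w : ℕ) : ℚ) := hab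
    have : (a : ℕ) + w = (b : ℕ) + w := by exact_mod_cast hab'
    exact Fin.ext (Nat.add_right_cancel this)

lemma detC_ne (w m : ℕ) :
    (Matrix.of fun i j : Fin (m + 1) => lamQ w (j : ℕ) (i : ℕ)).det ≠ 0 := by
  have htri : (Matrix.of fun i j : Fin (m + 1) => lamQ w (j : ℕ) (i : ℕ)).BlockTriangular
      OrderDual.toDual := by
    intro i j hij
    have h : (i : ℕ) < (j : ℕ) := hij
    simp only [Matrix.of_apply]
    unfold lamQ
    rw [if_neg (Nat.not_le.2 h)]
  rw [Matrix.det_of_lowerTriangular _ htri]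
  refine Finset.prod_ne_zero_iff.2 fun i _ => ?_
  simp only [Matrix.of_apply]
  unfold lamQ
  rw [if_pos le_rfl]
  simp [Nat.sub_self, Nat.factorial_ne_zero]

/-- For `m ≥ 0` and `w ≥ 1`, the `(2m+2)×(2m+2)` matrix `M^w` is invertible. -/
theorem Mmat_isUnit (w m : ℕ) (hw : 1 ≤ w) : IsUnit (Mmat w m) := by
  rw [Matrix.isUnit_iff_isUnit_det, isUnit_iff_ne_zero]
  have hM : Mmat w m = (Matrix.fromBlocks
      (Matrix.of fun i j : Fin (m + 1) => lamQ w (j : ℕ) (i : ℕ)) 0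
      (Matrix.of fun i j : Fin (m + 1) => muQ w (j : ℕ) (i : ℕ))
      (Matrix.of fun i j : Fin (m + 1) => muQ w (m + 1 + (j : ℕ)) (i : ℕ))).submatrix
      (Equiv.sumComm (Fin (m+1)) (Fin (m+1))) id := by
    ext i j
    cases i with
    | inl i =>
        cases j with
        | inl j => rfl
        | inr j => rfl
    | inr i =>
        cases j with
        | inl j => rfl
        | inr j =>
            show lamQ w (m + 1 + (j : ℕ)) (i : ℕ) = 0
            unfold lamQ
            have hi := i.isLt
            rw [if_neg (by omega)]
  rw [hM, Matrix.det_permute, Matrix.det_fromBlocks_zero₁₂]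
  refine mul_ne_zero ?_ (mul_ne_zero (detC_ne w m) (detB_ne w m))
  exact Int.cast_ne_zero.2 (Units.ne_zero _)
end

section
/- Let A be an associative ℂ-algebra acting on W, with derivation action on W^{⊗d}. For a monomial μ = a_1 * ⋯ * a_r in U(A) (r factors from A), the restriction of the action of μ to W^{⊗d} decomposes as Φ^d_μ = Σ_{p=1}^{d} Σ_{φ ∈ Part^r_p} g_φ, where Part^r_p is the set of partitions of {1,…,r} into p disjoint nonempty subsets, and for a partition φ with blocks S_1,…,S_p (each block {i_1 < ⋯ < i_k} giving the product m_i = a_{i_1}⋯a_{i_k} in A), the operator g_φ acts on w_1 ⊗ ⋯ ⊗ w_d as the sum over all ordered p-element subsets (j_1,…,j_p) of {1,…,d} of the tensor obtained by applying m_i to the j_i-th factor for each i and leaving the other factors fixed. -/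
open scoped TensorProduct

lemma fiber_succ {M : Type*} [Monoid M] {r d : ℕ} (j : Fin d) (c : Fin r → Fin d)
    (s : Fin d) (g : Fin (r + 1) → M) :
    (((List.finRange (r + 1)).filter fun i =>
        Fin.cons (α := fun _ : Fin (r+1) => Fin d) j c i = s).map g).prod
      = (if j = s then g 0 else 1)
        * (((List.finRange r).filter fun i => c i = s).map fun i => g i.succ).prod := by
  rw [List.finRange_succ, List.filter_cons]
  simp only [Fin.cons_zero, Fin.cons_succ, List.filter_map, Function.comp_def]
  split_ifs <;> simp_all [List.map_map, Function.comp_def]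

lemma key_s6 (W : Type) [AddCommGroup W] [Module ℂ W] (d : ℕ) :
    ∀ (r : ℕ) (f : Fin r → Module.End ℂ W),
    ((List.finRange r).map fun i => derAction W d (f i)).prod
      = ∑ c : Fin r → Fin d,
          (PiTensorProduct.map (fun s : Fin d =>
            (((List.finRange r).filter fun i => c i = s).map
              fun i => (f i : W →ₗ[ℂ] W)).prod) :
            Module.End ℂ (TPow W d)) := by
  intro r
  induction r with
  | zero =>
    intro f
    simp [PiTensorProduct.map_one]
  | succ r ih =>
    intro f
    have hL : ((List.finRange (r+1)).map fun i => derAction W d (f i)).prod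
        = derAction W d (f 0) * ∑ c : Fin r → Fin d,
            (PiTensorProduct.map (fun s : Fin d =>
              (((List.finRange r).filter fun i => c i = s).map
                fun i => ((f i.succ : Module.End ℂ W) : W →ₗ[ℂ] W)).prod) :
              Module.End ℂ (TPow W d)) := by
      rw [List.finRange_succ, List.map_cons, List.prod_cons, List.map_map]
      rw [show ((List.finRange r).map ((fun i => derAction W d (f i)) ∘ Fin.succ)).prod
          = ((List.finRange r).map (fun i => derAction W d ((f ∘ Fin.succ) i))).prod from rfl]
      rw [ih (f ∘ Fin.succ)]
      rfl
    rw [hL]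
    rw [← Fintype.sum_equiv (Fin.consEquiv (fun _ : Fin (r+1) => Fin d))
      (fun p : Fin d × (Fin r → Fin d) =>
        (PiTensorProduct.map (fun s : Fin d =>
          (((List.finRange (r+1)).filter fun i =>
              Fin.cons (α := fun _ : Fin (r+1) => Fin d) p.1 p.2 i = s).map
            fun i => (f i : W →ₗ[ℂ] W)).prod) : Module.End ℂ (TPow W d)))
      _ (fun p => rfl)]
    rw [Fintype.sum_prod_type]
    rw [derAction, Finset.sum_mul]
    refine Finset.sum_congr rfl fun j _ => ?_
    rw [Finset.mul_sum]
    refine Finset.sum_congr rfl fun c _ => ?_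
    rw [← PiTensorProduct.map_mul]
    congr 1
    funext s
    rw [fiber_succ]
    by_cases h : j = s
    · subst h
      simp [Function.update_self]
    · simp [Function.update_of_ne (Ne.symm h), h]
      exact LinearMap.id_comp _

/-- Decomposition `Φ^d_μ = Σ_{p=1}^{d} Σ_{φ ∈ Part^r_p} g_φ`. A partition `φ` of `{1,…,r}`
into `p` nonempty blocks together with the choice of an ordered `p`-element subset
`(j_1,…,j_p)` of `{1,…,d}` (assigning the block monomials `m_i` to distinct slots `j_i`)
is precisely the data of a function `c : Fin r → Fin d` whose image has exactly `p` elements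
(blocks are the nonempty fibers of `c`, assigned to the corresponding slot). The operator
`g_φ` (summed over its ordered subsets) thus corresponds to the sum over such `c` of the map
applying, in each slot `s`, the product (in increasing order) of `ρ(a_i)` over the fiber
`c⁻¹(s)` — the empty fiber acting as the identity. -/
theorem derAction_monomial_decomposition
    (A : Type) [NonUnitalRing A] [Module ℂ A] [SMulCommClass ℂ A A] [IsScalarTower ℂ A A]
    (W : Type) [AddCommGroup W] [Module ℂ W]
    (ρ : A →ₙₐ[ℂ] Module.End ℂ W) (d r : ℕ) (hd : 1 ≤ d) (hr : 1 ≤ r) (a : Fin r → A) :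
    ((List.finRange r).map fun i => derAction W d (ρ (a i))).prod
      = ∑ p ∈ Finset.Icc 1 d,
          ∑ c ∈ Finset.univ.filter (fun c : Fin r → Fin d => (Finset.univ.image c).card = p),
            (PiTensorProduct.map (fun s : Fin d =>
              (((List.finRange r).filter fun i => c i = s).map
                fun i => (ρ (a i) : W →ₗ[ℂ] W)).prod) :
              Module.End ℂ (TPow W d)) := by
  rw [key_s6 W d r (fun i => ρ (a i))]
  refine (Finset.sum_fiberwise_of_maps_to (fun c _ => ?_) _).symm
  rw [Finset.mem_Icc]
  constructor
  · haveI : Nonempty (Fin r) := Fin.pos_iff_nonempty.mp hr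
    exact Finset.card_pos.mpr ((Finset.univ_nonempty).image c)
  · exact (Finset.card_le_card (Finset.subset_univ _)).trans_eq (by simp)
end

section
/- Let A be an associative ℂ-algebra acting on W, and consider the derivation action of the Lie algebra A (and its enveloping algebra U(A)) on Sym^d(W). For each partition φ of {1,…,r} into p ≤ d nonempty blocks with associated monomials m_1,…,m_p ∈ A, the operator g_φ ∈ End(Sym^d(W)) defined by g_φ(w_1⋯w_d) = Σ_{J} (product where m_i is applied to the j_i-th factor for each i in the ordered p-subset J of {1,…,d}) lies in the span of restrictions of elements of U(A) of degree at most d. -/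
open scoped TensorProduct

section Aux

variable {A : Type} [NonUnitalRing A] [Module ℂ A] [SMulCommClass ℂ A A] [IsScalarTower ℂ A A]
variable {W : Type} [AddCommGroup W] [Module ℂ W]
variable (ρ : A →ₙₐ[ℂ] Module.End ℂ W) (d : ℕ)

/-- The operator applying the monomial `m i` to the `j i`-th tensor factor, for each `i`. -/
noncomputable def TT (p : ℕ) (j : Fin p → Fin d) (m : Fin p → A) : Module.End ℂ (TPow W d) :=
  PiTensorProduct.map (fun s : Fin d =>
    (((List.finRange p).filter fun i => j i = s).map fun i => (ρ (m i) : W →ₗ[ℂ] W)).prod)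

lemma filter_eq_singleton {α : Type*} [DecidableEq α] :
    ∀ {l : List α}, l.Nodup → ∀ {i : α}, i ∈ l → l.filter (fun x => x = i) = [i] := by
  intro l
  induction l with
  | nil => intro _ i hi; simp at hi
  | cons a l ih =>
    intro hl i hi
    rcases List.mem_cons.1 hi with h | h
    · subst h
      rw [List.filter_cons, if_pos (by simp)]
      have h2 : List.filter (fun x => decide (x = i)) l = [] := List.filter_eq_nil_iff.2 (by
        intro x hx
        simp only [decide_eq_true_eq]
        rintro rfl
        exact (List.nodup_cons.1 hl).1 hx)
      rw [h2]
    · have hne : ¬ (a = i) := by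
        rintro rfl
        exact (List.nodup_cons.1 hl).1 h
      rw [List.filter_cons, if_neg (by simpa using hne)]
      exact ih (List.nodup_cons.1 hl).2 h

lemma list_step (p : ℕ) (j' : Fin (p + 1) → Fin d) (m : Fin (p + 1) → A) (t : Fin d) :
    (((List.finRange (p + 1)).filter fun i => j' i = t).map
        fun i => (ρ (m i) : W →ₗ[ℂ] W)).prod
    = Function.update (fun _ : Fin d => (LinearMap.id : W →ₗ[ℂ] W)) (j' 0) (ρ (m 0)) t ∘ₗ
      (((List.finRange p).filter fun i => j' i.succ = t).map
        fun i => (ρ (m i.succ) : W →ₗ[ℂ] W)).prod := by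
  rw [List.finRange_succ, List.filter_cons]
  by_cases h : j' 0 = t
  · subst h
    rw [if_pos (by simp), List.map_cons, List.prod_cons, Function.update_self,
      List.filter_map, List.map_map]
    rfl
  · rw [if_neg (by simpa using h), Function.update_of_ne (Ne.symm h),
      List.filter_map, List.map_map]
    simp only [LinearMap.id_comp]
    rfl

set_option maxHeartbeats 4000000 in
lemma key_s7 (p : ℕ) (m : Fin p → A) :
    (∑ j : Fin p ↪ Fin d, TT ρ d p (⇑j) m)
      ∈ Submodule.span ℂ {h : Module.End ℂ (TPow W d) |
          ∃ l : List A, l.length ≤ p ∧ h = (l.map fun a => derAction W d (ρ a)).prod} := by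
  induction p with
  | zero =>
    apply Submodule.subset_span
    refine ⟨[], by simp, ?_⟩
    rw [Fintype.sum_unique]
    simp only [List.map_nil, List.prod_nil]
    show TT ρ d 0 _ _ = _
    unfold TT
    simp [List.finRange]
  | succ p ih =>
    -- notation
    set a := m 0 with ha
    set m' : Fin p → A := fun i => m i.succ with hm'
    -- Q j s : apply `a` at slot `s` on top of the action of `m'` along `j`
    set Q : (Fin p ↪ Fin d) → Fin d → Module.End ℂ (TPow W d) := fun j s =>
      PiTensorProduct.map (fun t : Fin d =>
        Function.update (fun _ : Fin d => (LinearMap.id : W →ₗ[ℂ] W)) s (ρ a) t ∘ₗ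
        (((List.finRange p).filter fun i => j i = t).map
          fun i => (ρ (m' i) : W →ₗ[ℂ] W)).prod) with hQ
    have main : (∑ j : Fin (p + 1) ↪ Fin d, TT ρ d (p + 1) (⇑j) m)
        = derAction W d (ρ a) * (∑ j : Fin p ↪ Fin d, TT ρ d p (⇑j) m')
          - ∑ i : Fin p, ∑ j : Fin p ↪ Fin d,
              TT ρ d p (⇑j) (Function.update m' i (a * m' i)) := by
      -- Step 1: reindex the sum over embeddings `Fin (p+1) ↪ Fin d` by the sigma type
      rw [← Equiv.sum_comp (Equiv.embeddingFinSucc p (Fin d)).symm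
        (fun j' : Fin (p + 1) ↪ Fin d => TT ρ d (p + 1) (⇑j') m)]
      rw [← Finset.univ_sigma_univ, Finset.sum_sigma]
      -- Step 2: identify each term with Q j s for s ∉ range j
      have step2 : ∀ (j : Fin p ↪ Fin d) (s : {i // i ∉ Set.range ⇑j}),
          TT ρ d (p + 1) (⇑((Equiv.embeddingFinSucc p (Fin d)).symm ⟨j, s⟩)) m = Q j s := by
        intro j s
        unfold TT
        rw [hQ]
        refine congrArg _ (funext fun t => ?_)
        rw [list_step]
        have h0 : ((Equiv.embeddingFinSucc p (Fin d)).symm ⟨j, s⟩) 0 = (s : Fin d) := by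
          rw [Equiv.coe_embeddingFinSucc_symm]
          exact Fin.cons_zero _ _
        have hsucc : ∀ i : Fin p,
            ((Equiv.embeddingFinSucc p (Fin d)).symm ⟨j, s⟩) i.succ = j i := by
          intro i
          rw [Equiv.coe_embeddingFinSucc_symm]
          exact Fin.cons_succ _ _ _
        simp only [h0, hsucc]
        rfl
      -- Step 3: for each j, sum over s ∉ range j = full sum minus collisions
      have step3 : ∀ j : Fin p ↪ Fin d,
          (∑ s : {i // i ∉ Set.range ⇑j}, Q j s)
            = (∑ s : Fin d, Q j s) - ∑ i : Fin p, Q j (j i) := by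
        intro j
        have hcompl : ∀ x : Fin d, x ∈ (Finset.univ.map j)ᶜ ↔ x ∉ Set.range ⇑j := by
          intro x
          simp [Set.mem_range]
        rw [eq_sub_iff_add_eq, ← Finset.sum_subtype ((Finset.univ.map j)ᶜ) hcompl (Q j),
          ← Finset.sum_map Finset.univ j (Q j), add_comm,
          Finset.sum_add_sum_compl]
      -- collision terms
      have step4 : ∀ (j : Fin p ↪ Fin d) (i : Fin p),
          Q j (j i) = TT ρ d p (⇑j) (Function.update m' i (a * m' i)) := by
        intro j i
        rw [hQ]
        unfold TT
        refine congrArg _ (funext fun t => ?_)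
        by_cases h : j i = t
        · subst h
          have hf : (List.finRange p).filter (fun x => j x = j i) = [i] := by
            have : (fun x : Fin p => decide (j x = j i)) = (fun x : Fin p => decide (x = i)) :=
              funext fun x => by simp [j.injective.eq_iff]
            rw [show (fun x : Fin p => decide ((⇑j) x = (⇑j) i)) = (fun x : Fin p => decide (x = i))
              from this]
            exact filter_eq_singleton (List.nodup_finRange p) (List.mem_finRange i)
          rw [Function.update_self, hf]
          simp only [List.map_cons, List.map_nil, List.prod_cons, List.prod_nil, mul_one,
            Function.update_self, map_mul]
          rfl
        · rw [Function.update_of_ne (Ne.symm h), LinearMap.id_comp]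
          congr 1
          apply List.map_congr_left
          intro x hx
          have hxt : (⇑j) x = t := of_decide_eq_true (List.mem_filter.1 hx).2
          have : x ≠ i := by rintro rfl; exact h hxt
          rw [Function.update_of_ne this]
      -- full sum over all s: recovers derAction * (sum over embeddings)
      have step5 : ∀ j : Fin p ↪ Fin d,
          (∑ s : Fin d, Q j s) = derAction W d (ρ a) * TT ρ d p (⇑j) m' := by
        intro j
        rw [derAction, Finset.sum_mul]
        refine Finset.sum_congr rfl fun s _ => ?_
        rw [hQ]
        unfold TT
        exact PiTensorProduct.map_comp _ _
      calc ∑ j : Fin p ↪ Fin d, ∑ s : {i // i ∉ Set.range ⇑j},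
            TT ρ d (p + 1) (⇑((Equiv.embeddingFinSucc p (Fin d)).symm ⟨j, s⟩)) m
          = ∑ j : Fin p ↪ Fin d, ((∑ s : Fin d, Q j s) - ∑ i : Fin p, Q j (j i)) := by
            refine Finset.sum_congr rfl fun j _ => ?_
            rw [← step3 j]
            exact Finset.sum_congr rfl fun s _ => step2 j s
        _ = derAction W d (ρ a) * (∑ j : Fin p ↪ Fin d, TT ρ d p (⇑j) m')
            - ∑ i : Fin p, ∑ j : Fin p ↪ Fin d,
                TT ρ d p (⇑j) (Function.update m' i (a * m' i)) := by
            rw [Finset.sum_sub_distrib, Finset.mul_sum]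
            congr 1
            · exact Finset.sum_congr rfl fun j _ => step5 j
            · exact (Finset.sum_congr rfl fun j _ =>
                Finset.sum_congr rfl fun i _ => step4 j i).trans Finset.sum_comm
    rw [main]
    -- now membership
    have hmono : Submodule.span ℂ {h : Module.End ℂ (TPow W d) |
          ∃ l : List A, l.length ≤ p ∧ h = (l.map fun a => derAction W d (ρ a)).prod}
        ≤ Submodule.span ℂ {h : Module.End ℂ (TPow W d) |
          ∃ l : List A, l.length ≤ p + 1 ∧ h = (l.map fun a => derAction W d (ρ a)).prod} :=
      Submodule.span_mono (fun h ⟨l, hl, he⟩ => ⟨l, hl.trans (Nat.le_succ p), he⟩)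
    refine sub_mem ?_ (Submodule.sum_mem _ fun i _ => hmono (ih (Function.update m' i (a * m' i))))
    -- left multiplication by derAction
    have := ih m'
    -- map under mulLeft
    have hx : derAction W d (ρ a) * (∑ j : Fin p ↪ Fin d, TT ρ d p (⇑j) m')
        = (LinearMap.mulLeft ℂ (derAction W d (ρ a))) (∑ j : Fin p ↪ Fin d, TT ρ d p (⇑j) m') := rfl
    rw [hx]
    have hmap := Submodule.apply_mem_span_image_of_mem_span
      (LinearMap.mulLeft ℂ (derAction W d (ρ a))) this
    refine Submodule.span_le.2 ?_ hmap
    rintro h ⟨h', ⟨l, hl, rfl⟩, rfl⟩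
    apply Submodule.subset_span
    exact ⟨a :: l, by simpa using hl, by simp [LinearMap.mulLeft_apply]⟩

end Aux

/-- The operator `g_φ` on `Sym^d(W)` attached to a partition `φ` of `{1,…,r}` into `p ≤ d`
blocks with associated monomials `m_1,…,m_p ∈ A`: it sums, over all ordered `p`-element
subsets `(j_1,…,j_p)` of `{1,…,d}` (i.e. embeddings `j : Fin p ↪ Fin d`), the map applying
`m_i` to the `j_i`-th factor and leaving the others fixed. It lies in the span `E_d` of the
(descended) actions of elements of `U(A)` of degree at most `d` — here expressed on lifts
to `W^{⊗d}`, composed with the quotient map onto `Sym^d(W)`. -/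
theorem g_phi_mem_E_d
    (A : Type) [NonUnitalRing A] [Module ℂ A] [SMulCommClass ℂ A A] [IsScalarTower ℂ A A]
    (W : Type) [AddCommGroup W] [Module ℂ W]
    (ρ : A →ₙₐ[ℂ] Module.End ℂ W) (d p : ℕ) (hp : p ≤ d) (m : Fin p → A) :
    (symRel W d).mkQ.comp
        (∑ j : Fin p ↪ Fin d, (PiTensorProduct.map (fun s : Fin d =>
          (((List.finRange p).filter fun i => j i = s).map
            fun i => (ρ (m i) : W →ₗ[ℂ] W)).prod) : Module.End ℂ (TPow W d)))
      ∈ Submodule.span ℂ {h : TPow W d →ₗ[ℂ] SymPow W d |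
          ∃ l : List A, l.length ≤ d ∧
            h = (symRel W d).mkQ.comp ((l.map fun a => derAction W d (ρ a)).prod)} := by
  have hk := key_s7 ρ d p m
  have himg := Submodule.apply_mem_span_image_of_mem_span
    (LinearMap.llcomp ℂ (TPow W d) (TPow W d) (SymPow W d) (symRel W d).mkQ) hk
  have hsub : (LinearMap.llcomp ℂ (TPow W d) (TPow W d) (SymPow W d) (symRel W d).mkQ) ''
        {h : Module.End ℂ (TPow W d) |
          ∃ l : List A, l.length ≤ p ∧ h = (l.map fun a => derAction W d (ρ a)).prod}
      ⊆ (Submodule.span ℂ {h : TPow W d →ₗ[ℂ] SymPow W d |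
          ∃ l : List A, l.length ≤ d ∧
            h = (symRel W d).mkQ.comp ((l.map fun a => derAction W d (ρ a)).prod)} :
          Submodule ℂ (TPow W d →ₗ[ℂ] SymPow W d)) := by
    rintro h ⟨h', ⟨l, hl, rfl⟩, rfl⟩
    exact Submodule.subset_span ⟨l, hl.trans hp, rfl⟩
  exact Submodule.span_le.2 hsub himg
end

section
/- For the (m+1)×(m+1) matrix B^w with entries B_{ij} = (−1)^{w+m+1+j} (w+m+1+j+i)!/(i+w)! for 0 ≤ i,j ≤ m (where w ≥ 1), B^w is invertible. -/
/-- The matrix `B^w` with entries `B_{ij} = (−1)^{w+m+1+j}(w+m+1+j+i)!/(i+w)!`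
for `0 ≤ i,j ≤ m`. -/
noncomputable def Bmat (w m : ℕ) : Matrix (Fin (m + 1)) (Fin (m + 1)) ℚ :=
  Matrix.of fun i j =>
    (-1 : ℚ) ^ (w + m + 1 + (j : ℕ)) *
      ((w + m + 1 + (j : ℕ) + (i : ℕ)).factorial : ℚ) / (((i : ℕ) + w).factorial : ℚ)

open Polynomial in
/-- For `w ≥ 1`, the matrix `B^w` is invertible. -/
theorem Bmat_isUnit (w m : ℕ) (hw : 1 ≤ w) : IsUnit (Bmat w m) := by
  rw [Matrix.isUnit_iff_isUnit_det]
  set r := w + m + 1 with hr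
  set s : Fin (m + 1) → ℚ := fun j => (-1 : ℚ) ^ (r + (j : ℕ)) with hs
  set a : Fin (m + 1) → ℚ :=
    fun i => ((r + (i : ℕ)).factorial : ℚ) / (((i : ℕ) + w).factorial : ℚ) with ha
  set H : Matrix (Fin (m + 1)) (Fin (m + 1)) ℚ :=
    Matrix.of (fun i j : Fin (m + 1) =>
      ((ascPochhammer ℚ (j : ℕ)).eval (((r + (i : ℕ) + 1 : ℕ) : ℚ)))) with hH
  have key : Bmat w m = Matrix.of (fun i j : Fin (m + 1) => s j * (a i * H i j)) := by
    ext i j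
    have h1 : ((ascPochhammer ℚ (j : ℕ)).eval (((r + (i : ℕ) + 1 : ℕ) : ℚ)))
        = (((r + (i : ℕ) + 1).ascFactorial (j : ℕ) : ℕ) : ℚ) := by
      rw [← ascPochhammer_nat_eq_ascFactorial, ascPochhammer_eval_cast]
    have h2 : (r + (j : ℕ) + (i : ℕ)).factorial
        = (r + (i : ℕ)).factorial * (r + (i : ℕ) + 1).ascFactorial (j : ℕ) := by
      rw [Nat.factorial_mul_ascFactorial]
      ring_nf
    have hfac : ((((i : ℕ) + w).factorial : ℚ)) ≠ 0 := by
      exact_mod_cast (Nat.factorial_pos _).ne'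
    simp only [Bmat, Matrix.of_apply, hs, ha, hH, h1, h2]
    push_cast
    field_simp
    rw [← hr, h2]
    push_cast
    ring
  rw [key, show (Matrix.of fun i j => s j * (a i * H i j)).det
      = (∏ j, s j) * (Matrix.of fun i j => a i * H i j).det from Matrix.det_mul_row s _,
    show (Matrix.of fun i j => a i * H i j).det = (∏ i, a i) * H.det from Matrix.det_mul_column a H]
  have hdetH : H.det ≠ 0 := by
    have := Matrix.det_eval_matrixOfPolynomials_eq_det_vandermonde
      (fun i : Fin (m + 1) => (((r + (i : ℕ) + 1 : ℕ) : ℚ)))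
      (fun j : Fin (m + 1) => ascPochhammer ℚ (j : ℕ))
      (fun j => ascPochhammer_natDegree ℚ (j : ℕ)) (fun j => monic_ascPochhammer ℚ (j : ℕ))
    rw [hH, ← this]
    rw [Matrix.det_vandermonde_ne_zero_iff]
    intro i j hij
    simp only at hij
    have : (r + (i : ℕ) + 1 : ℕ) = (r + (j : ℕ) + 1 : ℕ) := by exact_mod_cast hij
    omega
  refine isUnit_iff_ne_zero.mpr (mul_ne_zero ?_ (mul_ne_zero ?_ hdetH))
  · exact Finset.prod_ne_zero_iff.mpr fun j _ => by
      simp [hs, pow_ne_zero]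
  · refine Finset.prod_ne_zero_iff.mpr fun i _ => ?_
    have h1 : (((r + (i : ℕ)).factorial : ℚ)) ≠ 0 := by
      exact_mod_cast (Nat.factorial_pos _).ne'
    have h2 : ((((i : ℕ) + w).factorial : ℚ)) ≠ 0 := by
      exact_mod_cast (Nat.factorial_pos _).ne'
    exact div_ne_zero h1 h2
end

section
/- Let a, b, c be elements of a vertex (super)algebra and n ∈ ℤ. Then (:ab:) ∘_n c = Σ_{k≥0} (1/k!) :(∂^k a)(b ∘_{n+k} c): + (−1)^{|a||b|} Σ_{k≥0} b ∘_{n−k−1}(a ∘_k c). -/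
/-- Generalized binomial coefficient `C(m, l) = m(m−1)⋯(m−l+1)/l!` for `m ∈ ℤ`. -/
noncomputable def zc (m : ℤ) (l : ℕ) : ℂ :=
  (∏ i ∈ Finset.range l, ((m : ℂ) - (i : ℂ))) / (l.factorial : ℂ)

/-- The Koszul sign `(−1)^{|a||b|}` for parities `i, j ∈ ℤ/2`. -/
noncomputable def sgn (i j : ZMod 2) : ℂ := (-1 : ℂ) ^ ((i * j).val)

/-- A vertex superalgebra: a `ℤ/2`-graded `ℂ`-vector space with `ℤ`-indexed circle products
`∘_n`, a vacuum vector, a translation operator, satisfying truncation, vacuum, translation,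
grading axioms and the Borcherds identity (with Koszul signs). The Wick product is
`:ab: = a ∘_{−1} b`. -/
class VertexSuperAlg (V : Type) [AddCommGroup V] [Module ℂ V] where
  pr : ℤ → V →ₗ[ℂ] V →ₗ[ℂ] V
  vac : V
  T : Module.End ℂ V
  deg : ZMod 2 → Submodule ℂ V
  grading : ∀ v : V, ∃ v0 ∈ deg 0, ∃ v1 ∈ deg 1, v = v0 + v1
  vac_deg : vac ∈ deg 0
  pr_deg : ∀ (i j : ZMod 2) (n : ℤ) (a b : V), a ∈ deg i → b ∈ deg j → pr n a b ∈ deg (i + j)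
  T_deg : ∀ (i : ZMod 2) (a : V), a ∈ deg i → T a ∈ deg i
  trunc : ∀ a b : V, ∃ N : ℕ, ∀ n : ℕ, N ≤ n → pr (n : ℤ) a b = 0
  vac_left : ∀ (n : ℤ) (a : V), pr n vac a = if n = -1 then a else 0
  create : ∀ (a : V) (n : ℤ), 0 ≤ n → pr n a vac = 0
  create_neg_one : ∀ a : V, pr (-1) a vac = a
  T_def : ∀ a : V, T a = pr (-2) a vac
  T_deriv : ∀ (a b : V) (n : ℤ), pr n (T a) b = (-n : ℂ) • pr (n - 1) a b
  borcherds : ∀ (i j : ZMod 2) (a b c : V), a ∈ deg i → b ∈ deg j → ∀ m n k : ℤ,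
    (∑ᶠ l : ℕ, zc m l • pr (m + k - l) (pr (n + l) a b) c)
      = ∑ᶠ l : ℕ, ((-1 : ℂ) ^ l * zc n l) •
          (pr (m + n - l) a (pr (k + l) b c)
            - (sgn i j * (-1 : ℂ) ^ n) • pr (n + k - l) b (pr (m + l) a c))

open VertexSuperAlg

lemma zc_zero (l : ℕ) (hl : l ≠ 0) : zc 0 l = 0 := by
  have h : (∏ i ∈ Finset.range l, (((0 : ℤ) : ℂ) - (i : ℂ))) = 0 :=
    Finset.prod_eq_zero (Finset.mem_range.mpr (Nat.pos_of_ne_zero hl)) (by simp)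
  rw [zc, h, zero_div]

lemma zc_neg_one (l : ℕ) : zc (-1) l = (-1 : ℂ) ^ l := by
  have h : (∏ i ∈ Finset.range l, ((-1 : ℂ) - (i : ℂ))) = (-1) ^ l * (l.factorial : ℂ) := by
    induction l with
    | zero => simp
    | succ k ih =>
      rw [Finset.prod_range_succ, ih]
      push_cast [Nat.factorial_succ]
      ring
  have hf : (l.factorial : ℂ) ≠ 0 := Nat.cast_ne_zero.mpr l.factorial_ne_zero
  rw [zc]
  push_cast
  rw [h, mul_div_assoc, div_self hf, mul_one]

lemma supp_fin {V : Type} [AddCommGroup V] [Module ℂ V] (f : ℕ → V) (M : ℕ)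
    (h : ∀ l, M ≤ l → f l = 0) : (Function.support f).Finite := by
  apply Set.Finite.subset (Set.finite_Iio M)
  intro l hl
  rw [Function.mem_support] at hl
  by_contra h'
  exact hl (h l (by simpa [Set.mem_Iio, not_lt] using h'))

lemma pr_T_pow {V : Type} [AddCommGroup V] [Module ℂ V] [VertexSuperAlg V]
    (k : ℕ) (a x : V) :
    pr (-1) ((T ^ k) a) x = (k.factorial : ℂ) • pr (-1 - (k : ℤ)) a x := by
  induction k generalizing a with
  | zero => simp
  | succ m ih =>
    have h1 : (T ^ (m + 1)) a = (T ^ m) (T a) := by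
      rw [pow_succ]; rfl
    rw [h1, ih (T a), T_deriv, smul_smul]
    have e : (-1 - (m : ℤ) - 1) = -1 - ((m + 1 : ℕ) : ℤ) := by push_cast; ring
    rw [e]
    congr 1
    push_cast [Nat.factorial_succ]
    ring


/-- For homogeneous `a, b` of parities `i, j`, any `c` and any `n ∈ ℤ`,
`(:ab:) ∘_n c = Σ_{k≥0} (1/k!) :(∂^k a)(b ∘_{n+k} c): + (−1)^{|a||b|} Σ_{k≥0} b ∘_{n−k−1}(a ∘_k c)`. -/
theorem wick_product_circle_formula (V : Type) [AddCommGroup V] [Module ℂ V]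
    [VertexSuperAlg V] (i j : ZMod 2) (a b c : V)
    (ha : a ∈ deg (V := V) i) (hb : b ∈ deg (V := V) j) (n : ℤ) :
    pr n (pr (-1) a b) c
      = (∑ᶠ k : ℕ, ((k.factorial : ℂ))⁻¹ • pr (-1) ((T ^ k) a) (pr (n + k) b c))
        + sgn i j • ∑ᶠ k : ℕ, pr (n - k - 1) b (pr (k : ℤ) a c) := by
  have hB := borcherds (V := V) i j a b c ha hb 0 (-1) n
  -- LHS collapses to the single l = 0 term
  have hL : (∑ᶠ l : ℕ, zc 0 l • pr ((0 : ℤ) + n - l) (pr (-1 + l) a b) c)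
      = pr n (pr (-1) a b) c := by
    rw [finsum_eq_single _ 0 (fun x hx => by rw [zc_zero x hx, zero_smul])]
    simp [zc]
  -- coefficient on the RHS is 1, and signs simplify
  have hR : (∑ᶠ l : ℕ, ((-1 : ℂ) ^ l * zc (-1) l) •
          (pr ((0 : ℤ) + (-1) - l) a (pr (n + l) b c)
            - (sgn i j * (-1 : ℂ) ^ (-1 : ℤ)) • pr ((-1) + n - l) b (pr ((0 : ℤ) + l) a c)))
      = ∑ᶠ l : ℕ, (pr (-1 - (l : ℤ)) a (pr (n + l) b c)
            + sgn i j • pr (n - l - 1) b (pr (l : ℤ) a c)) := by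
    apply finsum_congr
    intro l
    have h1 : ((-1 : ℂ) ^ l * zc (-1) l) = 1 := by
      rw [zc_neg_one, ← pow_add]
      simp [pow_mul]
    have h2 : ((-1 : ℂ) ^ (-1 : ℤ)) = -1 := by norm_num
    have e1 : (0 : ℤ) + (-1) - l = -1 - l := by ring
    have e2 : (-1 : ℤ) + n - l = n - l - 1 := by ring
    have e3 : (0 : ℤ) + l = l := by ring
    rw [h1, h2, e1, e2, e3, one_smul]
    rw [mul_neg_one, neg_smul, sub_neg_eq_add]
  rw [hL, hR] at hB
  rw [hB]
  -- split the sum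
  obtain ⟨N₁, hN₁⟩ := trunc (V := V) b c
  obtain ⟨N₂, hN₂⟩ := trunc (V := V) a c
  have hf : (Function.support fun l : ℕ => pr (-1 - (l : ℤ)) a (pr (n + l) b c)).Finite := by
    apply supp_fin _ (N₁ + n.natAbs)
    intro l hl
    have h0 : (N₁ : ℤ) ≤ n + l := by omega
    have h3 : n + (l : ℤ) = ((n + l).toNat : ℤ) := by omega
    rw [h3, hN₁ (n + (l : ℤ)).toNat (by omega)]
    simp
  have hg : (Function.support fun l : ℕ => sgn i j • pr (n - (l : ℤ) - 1) b (pr (l : ℤ) a c)).Finite := by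
    apply supp_fin _ N₂
    intro l hl
    rw [hN₂ l hl]
    simp
  rw [finsum_add_distrib hf hg]
  congr 1
  · apply finsum_congr
    intro k
    rw [pr_T_pow, smul_smul, inv_mul_cancel₀ (Nat.cast_ne_zero.mpr k.factorial_ne_zero), one_smul]
  · have hfin : (Function.support fun l : ℕ => pr (n - (l : ℤ) - 1) b (pr (l : ℤ) a c)).Finite := by
      apply supp_fin _ N₂
      intro l hl
      rw [hN₂ l hl]; simp
    rw [smul_finsum' _ hfin]
end
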